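/- arXiv:1601.03937 — 4 statements merged into one kernel-verified Lean document; each statement's English description precedes it below -/
import Mathlib

section
/- The random series W^{(n)} = Z_{n−1} + Σ_{j=1}^∞ D_{(n−j−1):(n−2)}(Z_{n−j−1}, 1−p) is almost surely finite and has expectation E[W^{(n)}] = E[Z_0]/p. -/
open scoped ENNReal
open MeasureTheory ProbabilityTheory PMF

/-- One-step binomial thinning with retention probability `q`, as a `PMF`-kernel on `ℕ`. -/
noncomputable def thinPMF (q : ℝ≥0∞) (h : q ≤ 1) (k : ℕ) : PMF ℕ :=
  (PMF.binomial q.toNNReal (by simpa using ENNReal.toNNReal_mono ENNReal.one_ne_top h) k).map (Fin.val)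

lemma binomial_mean (q : ℝ≥0∞) (h : q ≤ 1) (n : ℕ) :
    ∑' i : Fin (n+1), (PMF.binomial q.toNNReal (by simpa using ENNReal.toNNReal_mono ENNReal.one_ne_top h) n i) * (i : ℕ) = q * n := by
  rw [tsum_fintype]
  have hsum : ∑ i : Fin (n+1), (PMF.binomial q.toNNReal (by simpa using ENNReal.toNNReal_mono ENNReal.one_ne_top h) n i) * (i : ℕ)
      = ∑ i ∈ Finset.range (n+1), q ^ i * (1-q) ^ (n - i) * (n.choose i) * i := by
    rw [Finset.sum_range fun i => q ^ i * (1-q) ^ (n - i) * (n.choose i) * i]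
    refine Finset.sum_congr rfl fun i _ => ?_
    erw [PMF.binomial_apply]
    congr 2
    rw [ENNReal.coe_toNNReal (ne_top_of_le_ne_top ENNReal.one_ne_top h), Fin.val_last]
  rw [hsum]
  cases n with
  | zero => simp
  | succ m =>
    rw [Finset.sum_range_succ']
    have key : ∀ j : ℕ, j ≤ m →
        q ^ (j+1) * (1-q) ^ (m + 1 - (j+1)) * ((m+1).choose (j+1) : ℝ≥0∞) * ((j+1 : ℕ) : ℝ≥0∞)
        = (q * ((m+1 : ℕ) : ℝ≥0∞)) * (q ^ j * (1-q) ^ (m - j) * (m.choose j)) := by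
      intro j hj
      rw [Nat.succ_sub_succ]
      have hc : ((m+1).choose (j+1) : ℝ≥0∞) * ((j+1 : ℕ) : ℝ≥0∞)
          = ((m+1 : ℕ) : ℝ≥0∞) * (m.choose j : ℕ) := by
        norm_cast
        exact (Nat.add_one_mul_choose_eq m j).symm
      rw [mul_assoc, hc]
      ring
    rw [Finset.sum_congr rfl (fun j hj => key j (Finset.mem_range_succ_iff.mp hj))]
    simp only [Nat.cast_zero, mul_zero, add_zero]
    rw [← Finset.mul_sum]
    have hbin : ∑ j ∈ Finset.range (m+1), q ^ j * (1-q) ^ (m - j) * ((m.choose j : ℕ) : ℝ≥0∞)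
        = (q + (1-q)) ^ m := by
      rw [add_pow]
    rw [hbin, add_tsub_cancel_of_le h, one_pow, mul_one]

lemma thinPMF_mean (q : ℝ≥0∞) (h : q ≤ 1) (k : ℕ) :
    ∫⁻ x, (x : ℝ≥0∞) ∂(thinPMF q h k).toMeasure = q * k := by
  rw [thinPMF, ← PMF.toMeasure_map (f := Fin.val) (PMF.binomial q.toNNReal (by simpa using ENNReal.toNNReal_mono ENNReal.one_ne_top h) k) (measurable_of_countable _),
    lintegral_map (by exact measurable_of_countable _) (measurable_of_countable _),
    lintegral_countable']
  rw [← binomial_mean q h k]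
  refine tsum_congr fun i => ?_
  rw [PMF.toMeasure_apply_singleton _ _ (measurableSet_singleton i), mul_comm]

/-- The stationary series `W^{(n)} = Z_{n−1} + Σ_{j≥1} D_{(n−j−1):(n−2)}(Z_{n−j−1},1−p)`:
here `Y j` (for `j ≥ 1`) is the `j`-fold thinning of an independent copy of `Z_0`, i.e. it is
conditionally `Binomial(Z, (1−p)^j)`, the `Y j` are independent, and `Y 0` is a copy of `Z_0`
(the term `Z_{n−1}`).  The series is a.s. finite and its (Lebesgue) mean is `E[Z_0]/p`. -/
theorem stationary_series_finite_and_mean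
    {Ω : Type*} [MeasureSpace Ω] [IsProbabilityMeasure (ℙ : Measure Ω)]
    (p : ℝ≥0∞) (hp0 : 0 < p) (hp1 : p ≤ 1)
    (Z : Ω → ℕ) (hZmeas : Measurable Z) (hZmean : ∫⁻ ω, (Z ω : ℝ≥0∞) < ∞)
    (Y : ℕ → Ω → ℕ) (hYmeas : ∀ j, Measurable (Y j))
    (hYindep : iIndepFun Y ℙ)
    (hYlaw : ∀ j : ℕ, Measure.map (Y j) ℙ
      = (Measure.map Z ℙ).bind
          (fun k => (thinPMF ((1 - p) ^ j) (pow_le_one' (by simp) j) k).toMeasure)) :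
    (∀ᵐ ω ∂(ℙ : Measure Ω), (∑' j : ℕ, (Y j ω : ℝ≥0∞)) < ∞) ∧
    ∫⁻ ω, (∑' j : ℕ, (Y j ω : ℝ≥0∞)) = (∫⁻ ω, (Z ω : ℝ≥0∞)) / p := by
  have hEY : ∀ j : ℕ, ∫⁻ ω, (Y j ω : ℝ≥0∞) = (1 - p) ^ j * ∫⁻ ω, (Z ω : ℝ≥0∞) := by
    intro j
    have h1 : ∫⁻ ω, (Y j ω : ℝ≥0∞) = ∫⁻ x, (x : ℝ≥0∞) ∂(Measure.map (Y j) ℙ) :=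
      (lintegral_map (f := fun n : ℕ => (n : ℝ≥0∞)) (measurable_of_countable _) (hYmeas j)).symm
    rw [h1, hYlaw j,
      Measure.lintegral_bind (measurable_of_countable _).aemeasurable (measurable_of_countable _).aemeasurable]
    simp_rw [thinPMF_mean]
    rw [lintegral_map (measurable_of_countable (fun k : ℕ => (1 - p) ^ j * (k : ℝ≥0∞))) hZmeas,
      lintegral_const_mul ((1 - p) ^ j)
        (show Measurable fun ω => ((Z ω : ℕ) : ℝ≥0∞) from
          (measurable_of_countable (fun n : ℕ => (n : ℝ≥0∞))).comp hZmeas)]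
  have hmeas : Measurable fun ω => ∑' j : ℕ, (Y j ω : ℝ≥0∞) :=
    Measurable.ennreal_tsum fun j => (measurable_of_countable _).comp (hYmeas j)
  have hTon : ∫⁻ ω, (∑' j : ℕ, (Y j ω : ℝ≥0∞))
      = ∑' j : ℕ, ∫⁻ ω, (Y j ω : ℝ≥0∞) :=
    lintegral_tsum fun j => ((measurable_of_countable _).comp (hYmeas j)).aemeasurable
  have hsum : ∫⁻ ω, (∑' j : ℕ, (Y j ω : ℝ≥0∞)) = (∫⁻ ω, (Z ω : ℝ≥0∞)) / p := by
    rw [hTon]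
    simp_rw [hEY]
    rw [ENNReal.tsum_mul_right, ENNReal.tsum_geometric, ENNReal.sub_sub_cancel ENNReal.one_ne_top hp1,
      ENNReal.div_eq_inv_mul]
  refine ⟨?_, hsum⟩
  refine ae_lt_top hmeas ?_
  rw [hsum]
  exact (ENNReal.div_lt_top hZmean.ne hp0.ne').ne
end

section
/- The stationary sequence W^{(n)} satisfies the recursion W^{(n+1)} = D_n(W^{(n)}, 1−p) + Z_n almost surely, i.e., it is a stationary solution of the recursion W_{n+1} = D_n(W_n, 1−p) + Z_n. -/
open scoped ENNReal
open MeasureTheory ProbabilityTheory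

section

variable {Ω : Type*}

open Classical in
/-- `aliveSet Z B b n ω` : the set of indices of particles of cohort `b` (which arrived at
time `b` in quantity `Z b ω`) that are still alive at time `n`: particle `(b,i)` survives
step `t` iff the Bernoulli(1−p) variable `B t (b,i)` equals `true`, thinning being applied
at each of the steps `b+1, …, n−1`. -/
noncomputable def aliveSet (Z : ℤ → Ω → ℕ) (B : ℤ → ℤ × ℕ → Ω → Bool) (b n : ℤ) (ω : Ω) : Finset ℕ :=
  (Finset.range (Z b ω)).filter (fun i => ∀ t ∈ Finset.Ico (b + 1) n, B t (b, i) ω = true)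

/-- The stationary sequence `W^{(n)} = Z_{n−1} + Σ_{j≥1} D_{(n−j−1):(n−2)}(Z_{n−j−1},1−p)`,
realized pathwise as the total number of particles of all cohorts `n−1−j`, `j ≥ 0`,
still alive at time `n`. -/
noncomputable def Wstat (Z : ℤ → Ω → ℕ) (B : ℤ → ℤ × ℕ → Ω → Bool) (n : ℤ) (ω : Ω) : ℝ≥0∞ :=
  ∑' j : ℕ, ((aliveSet Z B (n - 1 - j) n ω).card : ℝ≥0∞)

/-- Index type for the driving family: cohort sizes `Z` and survival indicators `B`. -/
abbrev Idx : Type := ℤ ⊕ (ℤ × ℤ × ℕ)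

abbrev IdxT : Idx → Type
  | .inl _ => ℕ
  | .inr _ => Bool

instance : ∀ i : Idx, MeasurableSpace (IdxT i)
  | .inl _ => inferInstance
  | .inr _ => inferInstance

/-- The combined driving family, as a single indexed family of random variables. -/
def fam (Z : ℤ → Ω → ℕ) (B : ℤ → ℤ × ℕ → Ω → Bool) : ∀ i : Idx, Ω → IdxT i
  | .inl n => Z n
  | .inr tbk => fun ω => B tbk.1 (tbk.2.1, tbk.2.2) ω

end

namespace WstatAux

variable {Ω : Type*}

/-- Shift on the index set. -/
def shiftIdx (n : ℤ) : Idx → Idx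
  | .inl k => .inl (n + k)
  | .inr tbk => .inr (n + tbk.1, n + tbk.2.1, tbk.2.2)

lemma shiftIdx_injective (n : ℤ) : Function.Injective (shiftIdx n) := by
  rintro (a | ⟨t, b, i⟩) (a' | ⟨t', b', i'⟩) h <;>
    simp only [shiftIdx, Sum.inl.injEq, Sum.inr.injEq, Prod.mk.injEq, reduceCtorEq] at h ⊢ <;>
    omega

/-- The shifted driving family. -/
def famS (Z : ℤ → Ω → ℕ) (B : ℤ → ℤ × ℕ → Ω → Bool) (n : ℤ) : ∀ i : Idx, Ω → IdxT i
  | .inl k => Z (n + k)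
  | .inr tbk => fun ω => B (n + tbk.1) (n + tbk.2.1, tbk.2.2) ω

lemma famS_measurable {Z : ℤ → Ω → ℕ} {B : ℤ → ℤ × ℕ → Ω → Bool} [MeasurableSpace Ω]
    (hmeasZ : ∀ n, Measurable (Z n)) (hmeasB : ∀ t b i, Measurable (fun ω => B t (b, i) ω))
    (n : ℤ) : ∀ i : Idx, Measurable (famS Z B n i)
  | .inl k => hmeasZ _
  | .inr tbk => hmeasB _ _ _

/-- unshift a family of sets -/
def unshiftSets (n : ℤ) (sets : ∀ i : Idx, Set (IdxT i)) : ∀ i : Idx, Set (IdxT i)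
  | .inl k => sets (.inl (k - n))
  | .inr tbk => sets (.inr (tbk.1 - n, tbk.2.1 - n, tbk.2.2))

lemma famS_preimage (Z : ℤ → Ω → ℕ) (B : ℤ → ℤ × ℕ → Ω → Bool) (n : ℤ)
    (sets : ∀ i : Idx, Set (IdxT i)) (i : Idx) :
    famS Z B n i ⁻¹' sets i = fam Z B (shiftIdx n i) ⁻¹' unshiftSets n sets (shiftIdx n i) := by
  rcases i with k | ⟨t, b, i⟩
  · show Z (n + k) ⁻¹' sets (.inl k) = Z (n + k) ⁻¹' sets (.inl (n + k - n))
    rw [add_sub_cancel_left]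
  · show (fun ω => B (n + t) (n + b, i) ω) ⁻¹' sets (.inr (t, b, i))
      = (fun ω => B (n + t) (n + b, i) ω) ⁻¹' sets (.inr (n + t - n, n + b - n, i))
    rw [add_sub_cancel_left, add_sub_cancel_left]

lemma unshiftSets_shift (n : ℤ) (sets : ∀ i : Idx, Set (IdxT i)) (i : Idx) :
    HEq (unshiftSets n sets (shiftIdx n i)) (sets i) := by
  rcases i with k | ⟨t, b, i⟩
  · show HEq (sets (.inl (n + k - n))) (sets (.inl k))
    rw [add_sub_cancel_left]
  · show HEq (sets (.inr (n + t - n, n + b - n, i))) (sets (.inr (t, b, i)))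
    rw [add_sub_cancel_left, add_sub_cancel_left]

end WstatAux

namespace WstatAux

variable {Ω : Type*}

lemma measurableSet_IdxT : ∀ (i : Idx) (s : Set (IdxT i)), MeasurableSet s := by
  rintro (k | tbk) s
  · exact .of_discrete
  · exact .of_discrete

lemma indep_famS [MeasureSpace Ω] {Z : ℤ → Ω → ℕ} {B : ℤ → ℤ × ℕ → Ω → Bool}
    (hIndep : iIndepFun (fam Z B) ℙ)
    (n : ℤ) (S : Finset Idx) (sets : ∀ i : Idx, Set (IdxT i)) :
    ℙ (⋂ i ∈ S, famS Z B n i ⁻¹' sets i) = ∏ i ∈ S, ℙ (famS Z B n i ⁻¹' sets i) := by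
  classical
  have hinj : Function.Injective (shiftIdx n) := shiftIdx_injective n
  have h1 : (⋂ i ∈ S, famS Z B n i ⁻¹' sets i)
      = ⋂ j ∈ S.image (shiftIdx n), fam Z B j ⁻¹' unshiftSets n sets j := by
    rw [Finset.set_biInter_finset_image]
    exact Set.iInter₂_congr fun i _ => famS_preimage Z B n sets i
  have h2 := hIndep.measure_inter_preimage_eq_mul (S.image (shiftIdx n))
    (sets := unshiftSets n sets) (fun j _ => measurableSet_IdxT _ _)
  rw [h1, h2, Finset.prod_image (fun i _ j _ h => hinj h)]
  exact Finset.prod_congr rfl fun i _ => congrArg _ (famS_preimage Z B n sets i).symm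

end WstatAux

namespace WstatAux

variable {Ω : Type*} [MeasureSpace Ω] [IsProbabilityMeasure (ℙ : Measure Ω)]
  {Z : ℤ → Ω → ℕ} {B : ℤ → ℤ × ℕ → Ω → Bool} {p : ℝ≥0∞}

lemma famS_marginal (hmeasZ : ∀ n, Measurable (Z n))
    (hmeasB : ∀ t b i, Measurable (fun ω => B t (b, i) ω))
    (hBlaw : ∀ t b i, Measure.map (fun ω => B t (b, i) ω) ℙ
      = (PMF.bernoulli (1 - p).toNNReal (by
        rw [← ENNReal.coe_le_coe, ENNReal.coe_toNNReal (by simp)]; exact tsub_le_self)).toMeasure)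
    (hZlaw : ∀ n, Measure.map (Z n) ℙ = Measure.map (Z 0) ℙ)
    (n m : ℤ) (i : Idx) (s : Set (IdxT i)) :
    ℙ (famS Z B n i ⁻¹' s) = ℙ (famS Z B m i ⁻¹' s) := by
  rcases i with k | ⟨t, b, j⟩
  · show ℙ (Z (n + k) ⁻¹' s) = ℙ (Z (m + k) ⁻¹' s)
    rw [← Measure.map_apply (hmeasZ _) (measurableSet_IdxT (.inl k) s),
      ← Measure.map_apply (hmeasZ _) (measurableSet_IdxT (.inl k) s), hZlaw (n + k), hZlaw (m + k)]
  · show ℙ ((fun ω => B (n + t) (n + b, j) ω) ⁻¹' s)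
      = ℙ ((fun ω => B (m + t) (m + b, j) ω) ⁻¹' s)
    rw [← Measure.map_apply (hmeasB _ _ _) (measurableSet_IdxT (.inr (t, b, j)) s),
      ← Measure.map_apply (hmeasB _ _ _) (measurableSet_IdxT (.inr (t, b, j)) s),
      hBlaw, hBlaw]

lemma finJoint_eq (hmeasZ : ∀ n, Measurable (Z n))
    (hmeasB : ∀ t b i, Measurable (fun ω => B t (b, i) ω))
    (hIndep : iIndepFun (fam Z B) ℙ)
    (hBlaw : ∀ t b i, Measure.map (fun ω => B t (b, i) ω) ℙ
      = (PMF.bernoulli (1 - p).toNNReal (by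
        rw [← ENNReal.coe_le_coe, ENNReal.coe_toNNReal (by simp)]; exact tsub_le_self)).toMeasure)
    (hZlaw : ∀ n, Measure.map (Z n) ℙ = Measure.map (Z 0) ℙ)
    (n m : ℤ) (S : Finset Idx) :
    Measure.map (fun ω (i : S) => famS Z B n i ω) ℙ
      = Measure.map (fun ω (i : S) => famS Z B m i ω) ℙ := by
  classical
  have hmeas : ∀ l : ℤ, Measurable (fun ω (i : S) => famS Z B l i ω) := fun l =>
    measurable_pi_lambda _ fun i => famS_measurable hmeasZ hmeasB l i
  haveI := Measure.isProbabilityMeasure_map (μ := ℙ) (hmeas n).aemeasurable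
  haveI := Measure.isProbabilityMeasure_map (μ := ℙ) (hmeas m).aemeasurable
  have key : ∀ u ∈ Set.pi Set.univ ''
      Set.pi Set.univ (fun i : S => { s : Set (IdxT i) | MeasurableSet s }),
      Measure.map (fun ω (i : S) => famS Z B n i ω) ℙ u
        = Measure.map (fun ω (i : S) => famS Z B m i ω) ℙ u := ?_
  · exact ext_of_generate_finite _ generateFrom_pi.symm isPiSystem_pi key
      (by simp only [measure_univ])
  rintro _ ⟨t, _, rfl⟩
  have htm : MeasurableSet (Set.pi Set.univ t) :=
    MeasurableSet.univ_pi fun i => measurableSet_IdxT _ _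
  rw [Measure.map_apply (hmeas n) htm, Measure.map_apply (hmeas m) htm]
  set sets : ∀ i : Idx, Set (IdxT i) :=
    fun i => if h : i ∈ S then t ⟨i, h⟩ else Set.univ with hsets
  have hpre : ∀ l : ℤ, (fun ω (i : S) => famS Z B l i ω) ⁻¹' Set.pi Set.univ t
      = ⋂ i ∈ S, famS Z B l i ⁻¹' sets i := by
    intro l
    ext ω
    simp only [Set.mem_preimage, Set.mem_pi, Set.mem_univ, forall_true_left, Set.mem_iInter]
    constructor
    · intro h i hi
      simpa [hsets, dif_pos hi] using h ⟨i, hi⟩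
    · intro h i
      simpa [hsets, dif_pos i.2] using h i i.2
  rw [hpre n, hpre m, indep_famS hIndep n S sets, indep_famS hIndep m S sets]
  exact Finset.prod_congr rfl fun i _ =>
    famS_marginal hmeasZ hmeasB hBlaw hZlaw n m i (sets i)

end WstatAux

namespace WstatAux

variable {Ω : Type*} [MeasureSpace Ω] [IsProbabilityMeasure (ℙ : Measure Ω)]
  {Z : ℤ → Ω → ℕ} {B : ℤ → ℤ × ℕ → Ω → Bool} {p : ℝ≥0∞}

lemma joint_eq (hmeasZ : ∀ n, Measurable (Z n))
    (hmeasB : ∀ t b i, Measurable (fun ω => B t (b, i) ω))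
    (hIndep : iIndepFun (fam Z B) ℙ)
    (hBlaw : ∀ t b i, Measure.map (fun ω => B t (b, i) ω) ℙ
      = (PMF.bernoulli (1 - p).toNNReal (by
        rw [← ENNReal.coe_le_coe, ENNReal.coe_toNNReal (by simp)]; exact tsub_le_self)).toMeasure)
    (hZlaw : ∀ n, Measure.map (Z n) ℙ = Measure.map (Z 0) ℙ)
    (n m : ℤ) :
    Measure.map (fun ω (i : Idx) => famS Z B n i ω) ℙ
      = Measure.map (fun ω (i : Idx) => famS Z B m i ω) ℙ := by
  classical
  have hmeas : ∀ l : ℤ, Measurable (fun ω (i : Idx) => famS Z B l i ω) := fun l =>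
    measurable_pi_lambda _ fun i => famS_measurable hmeasZ hmeasB l i
  haveI := Measure.isProbabilityMeasure_map (μ := ℙ) (hmeas n).aemeasurable
  haveI := Measure.isProbabilityMeasure_map (μ := ℙ) (hmeas m).aemeasurable
  have key : ∀ u ∈ measurableCylinders IdxT,
      Measure.map (fun ω (i : Idx) => famS Z B n i ω) ℙ u
        = Measure.map (fun ω (i : Idx) => famS Z B m i ω) ℙ u := ?_
  · exact ext_of_generate_finite _ generateFrom_measurableCylinders.symm
      isPiSystem_measurableCylinders key (by simp only [measure_univ])
  intro u hu
  obtain ⟨s, S, hS, rfl⟩ := (mem_measurableCylinders u).mp hu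
  have hcyl : MeasurableSet (cylinder s S) := .of_mem_measurableCylinders hu
  rw [Measure.map_apply (hmeas n) hcyl, Measure.map_apply (hmeas m) hcyl]
  have hfin : ∀ l : ℤ, Measurable (fun ω (i : s) => famS Z B l i ω) := fun l =>
    measurable_pi_lambda _ fun i => famS_measurable hmeasZ hmeasB l i
  have hpre : ∀ l : ℤ, (fun ω (i : Idx) => famS Z B l i ω) ⁻¹' cylinder s S
      = (fun ω (i : s) => famS Z B l i ω) ⁻¹' S := fun l => rfl
  rw [hpre n, hpre m, ← Measure.map_apply (hfin n) hS, ← Measure.map_apply (hfin m) hS,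
    finJoint_eq hmeasZ hmeasB hIndep hBlaw hZlaw n m s]

open Classical in
/-- The fixed measurable functional computing `Wstat` from the shifted driving family. -/
noncomputable def G : (∀ i : Idx, IdxT i) → ℝ≥0∞ := fun f =>
  ∑' (j : ℕ) (i : ℕ),
    if (i < f (.inl (-1 - (j : ℤ)))
        ∧ ∀ t ∈ Finset.Ico (-(j : ℤ)) 0, f (.inr (t, -1 - (j : ℤ), i)) = true)
    then 1 else 0

lemma measurable_G : Measurable G := by
  apply Measurable.ennreal_tsum; intro j
  apply Measurable.ennreal_tsum; intro i
  refine Measurable.ite ?_ measurable_const measurable_const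
  refine MeasurableSet.inter ?_ ?_
  · exact measurable_pi_apply (Sum.inl (-1 - (j : ℤ)))
      (MeasurableSet.of_discrete (s := {x : ℕ | i < x}))
  · have : {f : ∀ i : Idx, IdxT i |
        ∀ t ∈ Finset.Ico (-(j : ℤ)) 0, f (.inr (t, -1 - (j : ℤ), i)) = true}
        = ⋂ t ∈ (Finset.Ico (-(j : ℤ)) 0 : Finset ℤ),
            (fun f : ∀ i : Idx, IdxT i => f (.inr (t, -1 - (j : ℤ), i))) ⁻¹' {true} := by
      ext f; simp
    have h2 : MeasurableSet (⋂ t ∈ (Finset.Ico (-(j : ℤ)) 0 : Finset ℤ),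
        (fun f : ∀ i : Idx, IdxT i => f (.inr (t, -1 - (j : ℤ), i))) ⁻¹' {true}) :=
      MeasurableSet.biInter (Finset.Ico _ _).countable_toSet
        fun t _ => measurable_pi_apply _ (MeasurableSet.of_discrete (s := ({true} : Set Bool)))
    show MeasurableSet {f : ∀ i : Idx, IdxT i |
        ∀ t ∈ Finset.Ico (-(j : ℤ)) 0, f (.inr (t, -1 - (j : ℤ), i)) = true}
    exact this ▸ h2

lemma card_filter_tsum (N : ℕ) (P : ℕ → Prop) [DecidablePred P]
    [∀ i : ℕ, Decidable (i < N ∧ P i)] :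
    (((Finset.range N).filter P).card : ℝ≥0∞)
      = ∑' i : ℕ, if (i < N ∧ P i) then 1 else 0 := by
  rw [tsum_eq_sum (s := (Finset.range N).filter P)
    (fun i hi => by
      rw [if_neg]
      simpa [Finset.mem_filter, Finset.mem_range, not_and_or] using hi)]
  rw [Finset.sum_congr rfl (fun i hi => by
      rw [if_pos]
      simpa [Finset.mem_filter, Finset.mem_range] using hi)]
  simp

lemma Wstat_eq_G (n : ℤ) (ω : Ω) :
    Wstat Z B n ω = G (fun i => famS Z B n i ω) := by
  classical
  unfold Wstat G
  refine tsum_congr fun j => ?_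
  have harg : n + (-1 - (j : ℤ)) = n - 1 - (j : ℤ) := by ring
  have hset : aliveSet Z B (n - 1 - (j : ℤ)) n ω
      = (Finset.range (famS Z B n (.inl (-1 - (j : ℤ))) ω)).filter
          (fun i => ∀ t ∈ Finset.Ico (-(j : ℤ)) 0,
            famS Z B n (.inr (t, -1 - (j : ℤ), i)) ω = true) := by
    show aliveSet Z B (n - 1 - (j : ℤ)) n ω
      = (Finset.range (Z (n + (-1 - (j : ℤ))) ω)).filter
          (fun i => ∀ t ∈ Finset.Ico (-(j : ℤ)) 0,
            B (n + t) (n + (-1 - (j : ℤ)), i) ω = true)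
    rw [harg]
    unfold aliveSet
    ext i
    simp only [Finset.mem_filter, Finset.mem_range, Finset.mem_Ico, and_congr_right_iff]
    intro _
    constructor
    · intro h t ht
      exact h (n + t) ⟨by omega, by omega⟩
    · intro h t ht
      have := h (t - n) ⟨by omega, by omega⟩
      rwa [show n + (t - n) = t by ring] at this
  rw [hset]
  beta_reduce
  exact card_filter_tsum _ _

end WstatAux


/-- The stationary sequence `W^{(n)}` satisfies the recursion
`W^{(n+1)} = D_n(W^{(n)}, 1−p) + Z_n` almost surely (here: for every `ω`), where
`D_n(W^{(n)}, 1−p)` is the Bernoulli(1−p) thinning `B n` applied to the collection of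
particles alive at time `n`; moreover it is stationary: the law of `W^{(n)}` does not
depend on `n`.  Thus `W^{(n)}` is a stationary solution of `W_{n+1} = D_n(W_n,1−p) + Z_n`. -/
theorem Wstat_recursion
    {Ω : Type*} [MeasureSpace Ω] [IsProbabilityMeasure (ℙ : Measure Ω)]
    (p : ℝ≥0∞) (hp0 : 0 < p) (hp1 : p ≤ 1)
    (Z : ℤ → Ω → ℕ) (B : ℤ → ℤ × ℕ → Ω → Bool)
    (hmeasZ : ∀ n, Measurable (Z n)) (hmeasB : ∀ t b i, Measurable (fun ω => B t (b, i) ω))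
    (hIndep : iIndepFun (fam Z B) ℙ)
    (hBlaw : ∀ t b i, Measure.map (fun ω => B t (b, i) ω) ℙ
      = (PMF.bernoulli (1 - p).toNNReal (by
        rw [← ENNReal.coe_le_coe, ENNReal.coe_toNNReal (by simp)]; exact tsub_le_self)).toMeasure)
    (hZlaw : ∀ n, Measure.map (Z n) ℙ = Measure.map (Z 0) ℙ)
    (hZmean : ∫⁻ ω, (Z 0 ω : ℝ≥0∞) < ∞) :
    (∀ ω : Ω, ∀ n : ℤ,
      Wstat Z B (n + 1) ω
        = (∑' j : ℕ,
            (((aliveSet Z B (n - 1 - j) n ω).filter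
                (fun i => B n (n - 1 - j, i) ω = true)).card : ℝ≥0∞))
          + (Z n ω : ℝ≥0∞)) ∧
    (∀ n m : ℤ, Measure.map (Wstat Z B n) (ℙ : Measure Ω)
        = Measure.map (Wstat Z B m) (ℙ : Measure Ω)) := by
  constructor
  · -- the recursion
    intro ω n
    unfold Wstat
    rw [tsum_eq_zero_add' ENNReal.summable]
    have ht0 : aliveSet Z B (n + 1 - 1 - ((0 : ℕ) : ℤ)) (n + 1) ω = Finset.range (Z n ω) := by
      unfold aliveSet
      rw [show (n + 1 - 1 - ((0 : ℕ) : ℤ)) = n by simp]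
      rw [show Finset.Ico (n + 1) (n + 1) = ∅ from Finset.Ico_self _]
      simp
    have hsucc : ∀ j : ℕ, aliveSet Z B (n + 1 - 1 - ((j + 1 : ℕ) : ℤ)) (n + 1) ω
        = (aliveSet Z B (n - 1 - (j : ℤ)) n ω).filter
            (fun i => B n (n - 1 - (j : ℤ), i) ω = true) := by
      intro j
      have hb : (n + 1 - 1 - ((j + 1 : ℕ) : ℤ)) = n - 1 - (j : ℤ) := by push_cast; ring
      rw [hb]
      unfold aliveSet
      rw [Finset.filter_filter]
      ext i
      simp only [Finset.mem_filter, Finset.mem_range, Finset.mem_Ico]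
      constructor
      · rintro ⟨h1, h2⟩
        exact ⟨h1, fun t ht => h2 t ⟨ht.1, by omega⟩, h2 n ⟨by omega, by omega⟩⟩
      · rintro ⟨h1, h2, h3⟩
        refine ⟨h1, fun t ht => ?_⟩
        rcases eq_or_lt_of_le (Int.lt_add_one_iff.mp ht.2) with rfl | hlt
        · exact h3
        · exact h2 t ⟨ht.1, hlt⟩
    rw [ht0, Finset.card_range, add_comm]
    congr 1
    exact tsum_congr fun j => by rw [hsucc j]
  · -- stationarity
    intro n m
    have hJ : ∀ l : ℤ, Measurable (fun ω (i : Idx) => WstatAux.famS Z B l i ω) := fun l =>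
      measurable_pi_lambda _ fun i => WstatAux.famS_measurable hmeasZ hmeasB l i
    have hW : ∀ l : ℤ, Wstat Z B l
        = WstatAux.G ∘ (fun ω (i : Idx) => WstatAux.famS Z B l i ω) :=
      fun l => funext fun ω => WstatAux.Wstat_eq_G l ω
    rw [hW n, hW m, ← Measure.map_map WstatAux.measurable_G (hJ n),
      ← Measure.map_map WstatAux.measurable_G (hJ m),
      WstatAux.joint_eq hmeasZ hmeasB hIndep hBlaw hZlaw n m]
end

section
/- If each Z_n has a Poisson distribution with parameter c, then each W^{(n)} defined by the infinite series has a Poisson distribution with parameter c/p. -/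
open scoped ENNReal NNReal
open MeasureTheory ProbabilityTheory PMF

lemma thinPMF_apply (q : ℝ≥0∞) (h : q ≤ 1) (k n : ℕ) :
    thinPMF q h k n = if n ≤ k then (k.choose n : ℝ≥0∞) * q ^ n * (1 - q) ^ (k - n) else 0 := by
  rw [thinPMF, PMF.map_apply, tsum_fintype]
  by_cases hn : n ≤ k
  · rw [if_pos hn]
    rw [Finset.sum_eq_single (⟨n, Nat.lt_succ_of_le hn⟩ : Fin (k+1))]
    · rw [if_pos rfl]
      refine (PMF.binomial_apply q.toNNReal (by simpa using ENNReal.toNNReal_mono ENNReal.one_ne_top h)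
        k ⟨n, Nat.lt_succ_of_le hn⟩).trans ?_
      simp [PMF.binomial_apply, Fin.last, mul_comm, mul_assoc, mul_left_comm,
          ENNReal.coe_toNNReal (ne_top_of_le_ne_top ENNReal.one_ne_top h)]
    · intro b _ hb
      rw [if_neg]
      intro hnb
      exact hb (by ext; simp [← hnb])
    · simp
  · rw [if_neg hn]
    apply Finset.sum_eq_zero
    intro b _
    rw [if_neg]
    intro hnb
    exact hn (hnb ▸ Nat.le_of_lt_succ b.isLt)

lemma hasSum_thin_real (c q : ℝ≥0) (hq : q ≤ 1) (n : ℕ) :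
    HasSum (fun m : ℕ => poissonPMFReal c (n+m) *
        (((n+m).choose n : ℝ) * (q:ℝ)^n * ((1-q : ℝ≥0):ℝ)^m))
      (poissonPMFReal (c*q) n) := by
  have key : ∀ m : ℕ, poissonPMFReal c (n+m) *
      (((n+m).choose n : ℝ) * (q:ℝ)^n * ((1-q : ℝ≥0):ℝ)^m)
      = (Real.exp (-(c:ℝ)) * ((c:ℝ)*(q:ℝ))^n / n.factorial) *
        (((c:ℝ)*((1-q:ℝ≥0):ℝ))^m / m.factorial) := by
    intro m
    have hnat : (n+m).choose n * n.factorial * m.factorial = (n+m).factorial := by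
      have h := Nat.add_choose_mul_factorial_mul_factorial m n
      rw [Nat.add_comm m n] at h
      rw [Nat.mul_right_comm]
      exact h
    have hfact : ((n+m).choose n : ℝ) * n.factorial * m.factorial = ((n+m).factorial : ℝ) := by
      exact_mod_cast hnat
    unfold poissonPMFReal
    have h1 : ((n+m).factorial : ℝ) ≠ 0 := Nat.cast_ne_zero.mpr (Nat.factorial_ne_zero _)
    have h2 : (n.factorial : ℝ) ≠ 0 := Nat.cast_ne_zero.mpr (Nat.factorial_ne_zero _)
    have h3 : (m.factorial : ℝ) ≠ 0 := Nat.cast_ne_zero.mpr (Nat.factorial_ne_zero _)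
    have h4 : (((n+m).choose n : ℕ) : ℝ) ≠ 0 :=
      Nat.cast_ne_zero.mpr (Nat.choose_pos (Nat.le_add_right n m)).ne'
    rw [← hfact]
    push_cast
    field_simp
    rw [mul_pow, mul_pow, pow_add]
    ring
  have hsum := NormedSpace.expSeries_div_hasSum_exp ((c:ℝ)*((1-q:ℝ≥0):ℝ))
  rw [← Real.exp_eq_exp_ℝ] at hsum
  have := hsum.mul_left (Real.exp (-(c:ℝ)) * ((c:ℝ)*(q:ℝ))^n / n.factorial)
  have hend : (Real.exp (-(c:ℝ)) * ((c:ℝ)*(q:ℝ))^n / n.factorial) *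
      Real.exp ((c:ℝ)*((1-q:ℝ≥0):ℝ)) = poissonPMFReal (c*q) n := by
    have hcoe : ((1-q:ℝ≥0):ℝ) = 1 - (q:ℝ) := by rw [NNReal.coe_sub hq, NNReal.coe_one]
    unfold poissonPMFReal
    push_cast [hcoe]
    rw [div_mul_eq_mul_div, mul_right_comm, ← Real.exp_add]
    ring_nf
  rw [← hend]
  simpa [key] using this

lemma poisson_bind_thin (c q : ℝ≥0) (hq : (q:ℝ≥0∞) ≤ 1) :
    (poissonPMF c).bind (thinPMF q hq) = poissonPMF (c * q) := by
  have hq1 : q ≤ 1 := by exact_mod_cast hq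
  ext n
  rw [PMF.bind_apply]
  have h1q : (1 : ℝ≥0∞) - q = ((1 - q : ℝ≥0) : ℝ≥0∞) := by
    rw [ENNReal.coe_sub, ENNReal.coe_one]
  set g : ℕ → ℝ := fun k => if n ≤ k then
      poissonPMFReal c k * ((k.choose n : ℝ) * (q:ℝ)^n * ((1-q : ℝ≥0):ℝ)^(k-n)) else 0 with hg
  have hgnn : ∀ k, 0 ≤ g k := by
    intro k
    rw [hg]
    dsimp only
    split
    · have := @poissonPMFReal_nonneg c k
      positivity
    · exact le_refl 0
  have hterm : ∀ k, poissonPMF c k * thinPMF (q:ℝ≥0∞) hq k n = ENNReal.ofReal (g k) := by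
    intro k
    rw [thinPMF_apply, hg]
    dsimp only
    by_cases hk : n ≤ k
    · rw [if_pos hk, if_pos hk, h1q]
      rw [show poissonPMF c k = ENNReal.ofReal (poissonPMFReal c k) from rfl]
      rw [ENNReal.ofReal_mul poissonPMFReal_nonneg,
        ENNReal.ofReal_mul (by positivity), ENNReal.ofReal_mul (by positivity)]
      simp [ENNReal.ofReal_pow, ENNReal.ofReal_coe_nnreal]
    · simp [if_neg hk]
  have hhs : HasSum g (poissonPMFReal (c*q) n) := by
    have hinj : Function.Injective (fun m : ℕ => n + m) := add_right_injective n
    have hvanish : ∀ k, k ∉ Set.range (fun m : ℕ => n + m) → g k = 0 := by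
      intro k hk
      rw [hg]
      dsimp only
      rw [if_neg]
      intro hle
      exact hk ⟨k - n, by simpa using Nat.add_sub_cancel' hle⟩
    rw [← hinj.hasSum_iff hvanish]
    have : (g ∘ fun m : ℕ => n + m) = fun m : ℕ => poissonPMFReal c (n+m) *
        (((n+m).choose n : ℝ) * (q:ℝ)^n * ((1-q : ℝ≥0):ℝ)^m) := by
      funext m
      simp only [Function.comp, hg, if_pos (Nat.le_add_right n m), Nat.add_sub_cancel_left]
    rw [this]
    exact hasSum_thin_real c q hq1 n
  rw [show (poissonPMF (c*q)) n = ENNReal.ofReal (∑' k, g k) from by rw [hhs.tsum_eq]; rfl,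
    ENNReal.ofReal_tsum_of_nonneg hgnn hhs.summable]
  exact tsum_congr hterm

lemma pmf_toMeasure_bind (pp : PMF ℕ) (f : ℕ → PMF ℕ) :
    pp.toMeasure.bind (fun k => (f k).toMeasure) = (pp.bind f).toMeasure := by
  apply MeasureTheory.Measure.ext_of_singleton
  intro n
  rw [Measure.bind_apply (measurableSet_singleton n) measurable_from_top.aemeasurable,
    lintegral_countable', PMF.toMeasure_apply_singleton _ _ (measurableSet_singleton n),
    PMF.bind_apply]
  refine tsum_congr fun k => ?_
  rw [PMF.toMeasure_apply_singleton _ _ (measurableSet_singleton n),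
    PMF.toMeasure_apply_singleton _ _ (measurableSet_singleton k), mul_comm]

lemma poisson_real_conv (a b : ℝ≥0) (n : ℕ) :
    ∑ k ∈ Finset.range (n+1), poissonPMFReal a k * poissonPMFReal b (n-k)
      = poissonPMFReal (a+b) n := by
  unfold poissonPMFReal
  push_cast
  rw [add_pow, Finset.mul_sum, Finset.sum_div]
  rw [show Real.exp (-((a:ℝ)+(b:ℝ))) = Real.exp (-(a:ℝ)) * Real.exp (-(b:ℝ)) by
    rw [neg_add, Real.exp_add]]
  refine Finset.sum_congr rfl fun k hk => ?_
  have hkn : k ≤ n := Nat.lt_succ_iff.mp (Finset.mem_range.mp hk)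
  have hfact : (n.choose k : ℝ) * k.factorial * (n-k).factorial = n.factorial := by
    exact_mod_cast Nat.choose_mul_factorial_mul_factorial hkn
  have h2 : (k.factorial : ℝ) ≠ 0 := Nat.cast_ne_zero.mpr (Nat.factorial_ne_zero _)
  have h3 : ((n-k).factorial : ℝ) ≠ 0 := Nat.cast_ne_zero.mpr (Nat.factorial_ne_zero _)
  have h4 : ((n.choose k : ℕ) : ℝ) ≠ 0 := Nat.cast_ne_zero.mpr (Nat.choose_pos hkn).ne'
  rw [← hfact]
  field_simp

lemma poisson_conv {Ω : Type*} [MeasureSpace Ω] [IsProbabilityMeasure (ℙ : Measure Ω)]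
    (X Z : Ω → ℕ) (hX : Measurable X) (hZ : Measurable Z) (hindep : IndepFun X Z ℙ)
    (a b : ℝ≥0) (hXl : Measure.map X ℙ = (poissonPMF a).toMeasure)
    (hZl : Measure.map Z ℙ = (poissonPMF b).toMeasure) :
    Measure.map (fun ω => X ω + Z ω) ℙ = (poissonPMF (a+b)).toMeasure := by
  apply MeasureTheory.Measure.ext_of_singleton
  intro n
  rw [Measure.map_apply (f := fun ω => X ω + Z ω) (hX.add hZ) (measurableSet_singleton n)]
  have hset : (fun ω => X ω + Z ω) ⁻¹' {n}
      = ⋃ k ∈ Finset.range (n+1), (X ⁻¹' {k} ∩ Z ⁻¹' {n - k}) := by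
    ext ω
    simp only [Set.mem_preimage, Set.mem_singleton_iff, Set.mem_iUnion, Set.mem_inter_iff,
      Finset.mem_range]
    constructor
    · intro h
      exact ⟨X ω, by omega, rfl, by omega⟩
    · rintro ⟨k, hk, h1, h2⟩
      omega
  rw [hset, measure_biUnion_finset]
  · have hterm : ∀ k ∈ Finset.range (n+1),
        (ℙ : Measure Ω) (X ⁻¹' {k} ∩ Z ⁻¹' {n - k})
          = ENNReal.ofReal (poissonPMFReal a k * poissonPMFReal b (n-k)) := by
      intro k _
      rw [hindep.measure_inter_preimage_eq_mul _ _ (measurableSet_singleton k)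
        (measurableSet_singleton (n-k)),
        ← Measure.map_apply hX (measurableSet_singleton k),
        ← Measure.map_apply hZ (measurableSet_singleton (n-k)), hXl, hZl,
        PMF.toMeasure_apply_singleton _ _ (measurableSet_singleton k),
        PMF.toMeasure_apply_singleton _ _ (measurableSet_singleton (n-k))]
      rw [show (poissonPMF a) k = ENNReal.ofReal (poissonPMFReal a k) from rfl,
        show (poissonPMF b) (n-k) = ENNReal.ofReal (poissonPMFReal b (n-k)) from rfl,
        ← ENNReal.ofReal_mul poissonPMFReal_nonneg]
    rw [Finset.sum_congr rfl hterm,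
      ← ENNReal.ofReal_sum_of_nonneg (fun i _ => by
        have := @poissonPMFReal_nonneg a i
        have := @poissonPMFReal_nonneg b (n-i)
        positivity),
      poisson_real_conv,
      PMF.toMeasure_apply_singleton _ _ (measurableSet_singleton n)]
    rfl
  · intro i hi j hj hij
    refine Set.disjoint_left.mpr fun ω hωi hωj => hij ?_
    have h1 : X ω = i := hωi.1
    have h2 : X ω = j := hωj.1
    omega
  · exact fun k _ => (hX (measurableSet_singleton k)).inter (hZ (measurableSet_singleton _))

lemma thinPMF_congr {q q' : ℝ≥0∞} (h : q ≤ 1) (h' : q' ≤ 1) (e : q = q') (k : ℕ) :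
    thinPMF q h k = thinPMF q' h' k := by subst e; rfl

/-- If the `Z_n` are i.i.d. Poisson(c), then the stationary series
`W^{(n)} = Z_{n−1} + Σ_{j≥1} D_{(n−j−1):(n−2)}(Z_{n−j−1},1−p)` — realized here as the sum of
independent `Y j`, where `Y j` is conditionally `Binomial(Z, (1−p)^j)` with `Z ~ Poisson(c)` —
has a Poisson distribution with parameter `c/p`. -/
theorem stationary_series_poisson
    {Ω : Type*} [MeasureSpace Ω] [IsProbabilityMeasure (ℙ : Measure Ω)]
    (p : ℝ≥0) (c : ℝ≥0) (hp0 : 0 < p) (hp1 : p ≤ 1) (hc : 0 < c)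
    (Y : ℕ → Ω → ℕ) (hYmeas : ∀ j, Measurable (Y j))
    (hYindep : iIndepFun Y ℙ)
    (hYlaw : ∀ j : ℕ, Measure.map (Y j) ℙ
      = ((poissonPMF c).toMeasure).bind
          (fun k => (thinPMF ((1 - (p : ℝ≥0∞)) ^ j) (pow_le_one' (by simp) j) k).toMeasure)) :
    Measure.map (fun ω => ∑' j : ℕ, (Y j ω : ℝ≥0∞)) (ℙ : Measure Ω)
      = Measure.map (fun n : ℕ => (n : ℝ≥0∞)) ((poissonPMF (c / p)).toMeasure) := by
  -- the ENNReal thinning parameter is a coercion of an NNReal one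
  have hq : ∀ j : ℕ, (1 - (p : ℝ≥0∞)) ^ j = (((1-p)^j : ℝ≥0) : ℝ≥0∞) := by
    intro j
    rw [ENNReal.coe_pow, ENNReal.coe_sub, ENNReal.coe_one]
  have hqle : ∀ j : ℕ, ((((1-p)^j : ℝ≥0)) : ℝ≥0∞) ≤ 1 := by
    intro j; rw [← hq]; exact pow_le_one' (by simp) j
  -- each Y j is Poisson (c * (1-p)^j)
  have hlaw : ∀ j, Measure.map (Y j) ℙ = (poissonPMF (c * (1-p)^j)).toMeasure := by
    intro j
    rw [hYlaw j,
      show (fun k => (thinPMF ((1 - (p:ℝ≥0∞))^j) (pow_le_one' (by simp) j) k).toMeasure)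
          = fun k => (thinPMF (((1-p)^j : ℝ≥0) : ℝ≥0∞) (hqle j) k).toMeasure from
        funext fun k => by rw [thinPMF_congr _ (hqle j) (hq j) k],
      pmf_toMeasure_bind, poisson_bind_thin]
  -- partial sums
  set S : ℕ → Ω → ℕ := fun N ω => ∑ j ∈ Finset.range N, Y j ω with hS
  have hSmeas : ∀ N, Measurable (S N) := fun N =>
    Finset.measurable_sum _ (fun j _ => hYmeas j)
  have hSlaw : ∀ N, Measure.map (S N) ℙ
      = (poissonPMF (c * ∑ j ∈ Finset.range N, (1-p)^j)).toMeasure := by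
    intro N
    induction N with
    | zero =>
        have h0 : S 0 = fun _ => 0 := by funext ω; simp [hS]
        rw [h0, Measure.map_const, measure_univ, one_smul]
        have hpm : poissonPMF (c * ∑ j ∈ Finset.range 0, (1-p)^j) = PMF.pure 0 := by
          ext n
          rw [PMF.pure_apply]
          show ENNReal.ofReal (poissonPMFReal _ n) = _
          unfold poissonPMFReal
          rcases Nat.eq_zero_or_pos n with hn | hn
          · subst hn; simp
          · rw [if_neg (by omega)]
            simp [zero_pow hn.ne']
        rw [hpm, PMF.toMeasure_pure]
    | succ N ih =>
        have hstep : S (N+1) = fun ω => S N ω + Y N ω := by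
          funext ω; simp [hS, Finset.sum_range_succ]
        have hindep : IndepFun (S N) (Y N) ℙ := by
          have h := hYindep.indepFun_sum_range_succ hYmeas N
          have hEq : S N = ∑ j ∈ Finset.range N, Y j := by
            funext ω; simp [hS]
          rwa [hEq]
        rw [hstep, poisson_conv (S N) (Y N) (hSmeas N) (hYmeas N) hindep _ _ ih (hlaw N)]
        congr 1
        rw [Finset.sum_range_succ, mul_add]
  -- the (ENNReal-valued) total sum
  set T : Ω → ℝ≥0∞ := fun ω => ∑' j : ℕ, (Y j ω : ℝ≥0∞) with hT
  have hTmeas : Measurable T :=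
    Measurable.ennreal_tsum fun j => measurable_from_top.comp (hYmeas j)
  haveI : IsProbabilityMeasure (Measure.map T ℙ) :=
    Measure.isProbabilityMeasure_map hTmeas.aemeasurable
  haveI : IsProbabilityMeasure
      (Measure.map (fun n : ℕ => (n : ℝ≥0∞)) ((poissonPMF (c / p)).toMeasure)) :=
    Measure.isProbabilityMeasure_map measurable_from_top.aemeasurable
  apply MeasureTheory.Measure.ext_of_Iic
  intro x
  rcases eq_or_ne x ∞ with hx | hx
  · subst hx
    rw [Set.Iic_top]
    simp [measure_univ]
  -- now x is finite
  rw [Measure.map_apply hTmeas measurableSet_Iic,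
    Measure.map_apply measurable_from_top measurableSet_Iic]
  set m := Nat.floor x.toReal with hm
  have hmem : ∀ n : ℕ, ((n:ℝ≥0∞) ≤ x ↔ n ≤ m) := by
    intro n
    rw [hm, Nat.le_floor_iff ENNReal.toReal_nonneg,
      ← ENNReal.toReal_natCast n,
      ENNReal.toReal_le_toReal (ENNReal.natCast_ne_top n) hx]
  set B : Set ℕ := {n : ℕ | (n:ℝ≥0∞) ≤ x} with hB
  have hpre : (fun n : ℕ => (n:ℝ≥0∞)) ⁻¹' Set.Iic x = B := rfl
  have hBfin : B = ↑(Finset.range (m+1)) := by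
    ext n
    simp [hB, hmem n, Nat.lt_succ_iff]
  -- event decomposition
  have hiInter : T ⁻¹' Set.Iic x = ⋂ N, S N ⁻¹' B := by
    ext ω
    simp only [Set.mem_preimage, Set.mem_Iic, Set.mem_iInter, hB, Set.mem_setOf_eq]
    constructor
    · intro h N
      rw [show ((S N ω : ℕ) : ℝ≥0∞) = ∑ j ∈ Finset.range N, (Y j ω : ℝ≥0∞) by
        simp only [hS]; push_cast; rfl]
      exact le_trans (ENNReal.sum_le_tsum _) h
    · intro h
      rw [hT]
      dsimp only
      rw [ENNReal.tsum_eq_iSup_sum]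
      refine iSup_le fun s => ?_
      obtain ⟨N, hN⟩ := s.exists_nat_subset_range
      refine le_trans (Finset.sum_le_sum_of_subset hN) (le_trans (le_of_eq ?_) (h N))
      simp only [hS]; push_cast; rfl
  rw [hiInter]
  -- limits
  have hanti : Antitone (fun N => S N ⁻¹' B) := by
    intro N M hNM ω hω
    simp only [Set.mem_preimage, hB, Set.mem_setOf_eq] at hω ⊢
    refine le_trans ?_ hω
    have : S N ω ≤ S M ω :=
      Finset.sum_le_sum_of_subset (Finset.range_subset_range.mpr hNM)
    exact_mod_cast Nat.cast_le.mpr this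
  have hlim1 : Filter.Tendsto (fun N => (ℙ : Measure Ω) (S N ⁻¹' B)) Filter.atTop
      (nhds ((ℙ : Measure Ω) (⋂ N, S N ⁻¹' B))) :=
    tendsto_measure_iInter_atTop
      (fun N => ((hSmeas N) MeasurableSpace.measurableSet_top).nullMeasurableSet)
      hanti ⟨0, measure_ne_top _ _⟩
  -- identify ℙ (S N ⁻¹' B) with a finite sum of Poisson masses
  have hval : ∀ N, (ℙ : Measure Ω) (S N ⁻¹' B)
      = ∑ k ∈ Finset.range (m+1),
          ENNReal.ofReal (poissonPMFReal (c * ∑ j ∈ Finset.range N, (1-p)^j) k) := by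
    intro N
    rw [← Measure.map_apply (hSmeas N) MeasurableSpace.measurableSet_top, hSlaw N,
      hBfin, PMF.toMeasure_apply_finset]
    rfl
  -- convergence of the Poisson parameters
  have hppos : (0:ℝ) < p := hp0
  have h1p : ((1-p : ℝ≥0) : ℝ) = 1 - (p:ℝ) := by rw [NNReal.coe_sub hp1, NNReal.coe_one]
  have hgeo : Filter.Tendsto
      (fun N => ((c:ℝ) * ∑ j ∈ Finset.range N, ((1-p : ℝ≥0):ℝ)^j)) Filter.atTop
      (nhds ((c/p : ℝ≥0) : ℝ)) := by
    have hs : HasSum (fun j : ℕ => ((1-p : ℝ≥0):ℝ)^j) (1 - ((1-p : ℝ≥0):ℝ))⁻¹ :=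
      hasSum_geometric_of_lt_one (by positivity) (by rw [h1p]; linarith)
    have := (hs.tendsto_sum_nat).const_mul (c:ℝ)
    convert this using 2
    rw [h1p, NNReal.coe_div]
    field_simp
    rw [sub_sub_cancel, div_self hppos.ne']
  have hterm_tendsto : ∀ k : ℕ, Filter.Tendsto
      (fun N => ENNReal.ofReal (poissonPMFReal (c * ∑ j ∈ Finset.range N, (1-p)^j) k))
      Filter.atTop (nhds (ENNReal.ofReal (poissonPMFReal (c/p) k))) := by
    intro k
    have hcont : Continuous (fun r : ℝ => Real.exp (-r) * r^k / (k.factorial : ℝ)) :=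
      ((Real.continuous_exp.comp continuous_neg).mul (continuous_pow k)).div_const _
    have hcomp := (hcont.tendsto _).comp hgeo
    have heq : ∀ N, (fun r : ℝ => Real.exp (-r) * r^k / (k.factorial : ℝ))
        ((c:ℝ) * ∑ j ∈ Finset.range N, ((1-p : ℝ≥0):ℝ)^j)
        = poissonPMFReal (c * ∑ j ∈ Finset.range N, (1-p)^j) k := by
      intro N
      unfold poissonPMFReal
      push_cast
      rfl
    have : Filter.Tendsto (fun N => poissonPMFReal (c * ∑ j ∈ Finset.range N, (1-p)^j) k)
        Filter.atTop (nhds (poissonPMFReal (c/p) k)) := by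
      refine Filter.Tendsto.congr heq ?_
      exact hcomp
    exact (ENNReal.continuous_ofReal.tendsto _).comp this
  have hlim2 : Filter.Tendsto (fun N => (ℙ : Measure Ω) (S N ⁻¹' B)) Filter.atTop
      (nhds (∑ k ∈ Finset.range (m+1), ENNReal.ofReal (poissonPMFReal (c/p) k))) := by
    rw [show (fun N => (ℙ : Measure Ω) (S N ⁻¹' B))
        = fun N => ∑ k ∈ Finset.range (m+1),
            ENNReal.ofReal (poissonPMFReal (c * ∑ j ∈ Finset.range N, (1-p)^j) k) from
      funext hval]
    exact tendsto_finset_sum _ fun k _ => hterm_tendsto k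
  rw [tendsto_nhds_unique hlim1 hlim2, hpre, hBfin, PMF.toMeasure_apply_finset]
  rfl
end

section
/- If Z_0 is a nonnegative integer random variable with finite exponential moment E[e^{K_0 Z_0}] < ∞ for some K_0 > 0, then for sufficiently small K > 0 the stationary variable W^{(0)} also has finite exponential moment; more precisely E[e^{K W^{(0)}}] = Π_{n=0}^∞ E[(1 + (e^K − 1)(1−p)^n)^{Z_0}] < ∞. -/
open scoped ENNReal NNReal
open MeasureTheory ProbabilityTheory PMF

lemma pgf_thin (Q : ℝ≥0∞) (hQ : Q ≤ 1) (T : ℝ≥0∞) (k : ℕ) :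
    ∫⁻ n, T ^ n ∂(thinPMF Q hQ k).toMeasure = (Q * T + (1 - Q)) ^ k := by
  have hQtop : Q ≠ ⊤ := ne_top_of_le_ne_top ENNReal.one_ne_top hQ
  rw [thinPMF, ← PMF.toMeasure_map (f := Fin.val) (PMF.binomial Q.toNNReal (by simpa using ENNReal.toNNReal_mono ENNReal.one_ne_top hQ) k) (measurable_of_countable _),
    lintegral_map (measurable_of_countable _) (measurable_of_countable _),
    lintegral_countable']
  have : ∀ i : Fin (k+1), (PMF.binomial Q.toNNReal (by simpa using ENNReal.toNNReal_mono ENNReal.one_ne_top hQ) k).toMeasure {i} = (PMF.binomial Q.toNNReal (by simpa using ENNReal.toNNReal_mono ENNReal.one_ne_top hQ) k) i :=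
    fun i => PMF.toMeasure_apply_singleton _ _ (measurableSet_singleton i)
  have hb := fun i => PMF.binomial_apply Q.toNNReal (by simpa using ENNReal.toNNReal_mono ENNReal.one_ne_top hQ) k i
  simp only [this, hb, tsum_fintype, Fin.val_last, ENNReal.coe_toNNReal hQtop]
  rw [Fin.sum_univ_eq_sum_range
    (fun i => T ^ i * (Q ^ i * (1 - Q) ^ (k - i) * (k.choose i : ℝ≥0∞))), add_pow]
  exact Finset.sum_congr rfl (fun i _ => by ring)

lemma lintegral_pow_of_law {Ω : Type*} [MeasureSpace Ω] (Z : Ω → ℕ) (hZ : Measurable Z)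
    (Yj : Ω → ℕ) (hYj : Measurable Yj) (Q : ℝ≥0∞) (hQ : Q ≤ 1)
    (hlaw : Measure.map Yj ℙ = (Measure.map Z ℙ).bind (fun k => (thinPMF Q hQ k).toMeasure))
    (T : ℝ≥0∞) :
    ∫⁻ ω, T ^ (Yj ω) ∂ℙ = ∫⁻ ω, (Q * T + (1 - Q)) ^ (Z ω) ∂ℙ := by
  rw [← lintegral_map (measurable_of_countable _) hYj, hlaw,
    Measure.lintegral_bind (measurable_of_countable _).aemeasurable (measurable_of_countable _).aemeasurable]
  simp_rw [pgf_thin]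
  rw [lintegral_map (measurable_of_countable _) hZ]

lemma lintegral_pow_sum {Ω : Type*} [MeasureSpace Ω] [IsProbabilityMeasure (ℙ : Measure Ω)]
    (Y : ℕ → Ω → ℕ) (hYmeas : ∀ j, Measurable (Y j))
    (hYindep : iIndepFun Y ℙ) (T : ℝ≥0∞) (N : ℕ) :
    ∫⁻ ω, T ^ (∑ j ∈ Finset.range N, Y j ω) ∂ℙ
      = ∏ j ∈ Finset.range N, ∫⁻ ω, T ^ (Y j ω) ∂ℙ := by
  induction N with
  | zero => simp
  | succ n ih =>
    rw [Finset.prod_range_succ, ← ih]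
    have hind : IndepFun (∑ j ∈ Finset.range n, Y j) (Y n) ℙ :=
      hYindep.indepFun_sum_range_succ hYmeas n
    have hfun : (∑ j ∈ Finset.range n, Y j) = fun ω => ∑ j ∈ Finset.range n, Y j ω := by
      funext ω; simp
    rw [hfun] at hind
    have hind2 : IndepFun (fun ω => T ^ (∑ j ∈ Finset.range n, Y j ω))
        (fun ω => T ^ (Y n ω)) ℙ :=
      hind.comp (measurable_of_countable _) (measurable_of_countable _)
    have hm1 : Measurable (fun ω => T ^ (∑ j ∈ Finset.range n, Y j ω)) :=
      (measurable_of_countable (fun m : ℕ => T ^ m)).comp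
        (by simpa using Finset.measurable_sum (Finset.range n) (fun i _ => hYmeas i))
    have := lintegral_mul_eq_lintegral_mul_lintegral_of_indepFun
      hm1 ((measurable_of_countable (fun m : ℕ => T ^ m)).comp (hYmeas n)) hind2
    simp only [Pi.mul_apply] at this
    simp_rw [Finset.sum_range_succ, pow_add]
    exact this

lemma ennreal_tprod_eq_iSup (a : ℕ → ℝ≥0∞) (ha : ∀ n, 1 ≤ a n) :
    ∏' n, a n = ⨆ N, ∏ j ∈ Finset.range N, a j := by
  have hmono : Monotone (fun s : Finset ℕ => ∏ i ∈ s, a i) := fun s t hst =>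
    Finset.prod_le_prod_of_subset_of_one_le' hst (fun i _ _ => ha i)
  have hasprod : HasProd a (⨆ s : Finset ℕ, ∏ i ∈ s, a i) := tendsto_atTop_iSup hmono
  rw [hasprod.tprod_eq]
  apply le_antisymm
  · refine iSup_le fun s => ?_
    obtain ⟨N, hN⟩ := s.exists_nat_subset_range
    exact le_iSup_of_le N (hmono hN)
  · exact iSup_le fun N => le_iSup_of_le (Finset.range N) le_rfl

lemma exp_convex_bound {θ K₀ : ℝ} (hθ : 0 ≤ θ) (hK : θ ≤ K₀) (hK0 : 0 < K₀) {x : ℝ}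
    (hx : 0 ≤ x) : Real.exp (θ * x) ≤ 1 + (θ / K₀) * (Real.exp (K₀ * x) - 1) := by
  have hu0 : 0 ≤ θ / K₀ := div_nonneg hθ hK0.le
  have hu1 : θ / K₀ ≤ 1 := div_le_one_of_le₀ hK hK0.le
  have h := convexOn_exp.2 (Set.mem_univ (0:ℝ)) (Set.mem_univ (K₀ * x))
    (by linarith : (0:ℝ) ≤ 1 - θ/K₀) hu0 (by ring)
  have hxy : (1 - θ/K₀) • (0:ℝ) + (θ/K₀) • (K₀ * x) = θ * x := by
    rw [smul_eq_mul, smul_eq_mul, mul_zero, zero_add, ← mul_assoc, div_mul_cancel₀ θ hK0.ne']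
  rw [hxy] at h
  simp only [smul_eq_mul, Real.exp_zero, mul_one] at h
  linarith

lemma pow_base_bound {θ K₀ : ℝ} (hθ : 0 ≤ θ) (hK : θ ≤ K₀) (hK0 : 0 < K₀) (z : ℕ) :
    (1 + θ) ^ z ≤ 1 + (θ / K₀) * (Real.exp (K₀ * z) - 1) := by
  calc (1 + θ) ^ z ≤ (Real.exp θ) ^ z := by
        apply pow_le_pow_left₀ (by linarith)
        linarith [Real.add_one_le_exp θ]
    _ = Real.exp (θ * z) := by rw [← Real.exp_nat_mul, mul_comm]
    _ ≤ _ := exp_convex_bound hθ hK hK0 (Nat.cast_nonneg z)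

lemma factor_bound {Ω : Type*} [MeasureSpace Ω] [IsProbabilityMeasure (ℙ : Measure Ω)]
    (Z : Ω → ℕ) (hZ : Measurable Z) {K₀ θ : ℝ} (hθ : 0 ≤ θ) (hK : θ ≤ K₀) (hK0 : 0 < K₀)
    (hM : ∫⁻ ω, ENNReal.ofReal (Real.exp (K₀ * (Z ω : ℝ))) ∂ℙ ≠ ∞) :
    ∫⁻ ω, ENNReal.ofReal ((1 + θ) ^ (Z ω)) ∂ℙ
      ≤ 1 + ENNReal.ofReal (θ / K₀) *
          ((∫⁻ ω, ENNReal.ofReal (Real.exp (K₀ * (Z ω : ℝ))) ∂ℙ) - 1) := by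
  set M := ∫⁻ ω, ENNReal.ofReal (Real.exp (K₀ * (Z ω : ℝ))) ∂ℙ with hMdef
  set u := θ / K₀ with hu
  set m := (M - 1).toReal with hm
  have hu0 : 0 ≤ u := div_nonneg hθ hK0.le
  have hfmeas : Measurable (fun ω => ENNReal.ofReal (Real.exp (K₀ * (Z ω : ℝ)))) :=
    (measurable_of_countable (fun n : ℕ => ENNReal.ofReal (Real.exp (K₀ * (n : ℝ))))).comp hZ
  have hone_le : ∀ ω, (1:ℝ≥0∞) ≤ ENNReal.ofReal (Real.exp (K₀ * (Z ω : ℝ))) := by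
    intro ω
    rw [← ENNReal.ofReal_one]
    exact ENNReal.ofReal_le_ofReal (Real.one_le_exp (by positivity))
  have step1 : ∫⁻ ω, ENNReal.ofReal ((1 + θ) ^ (Z ω)) ∂ℙ
      ≤ ∫⁻ ω, (1 + ENNReal.ofReal u * (ENNReal.ofReal (Real.exp (K₀ * (Z ω : ℝ))) - 1)) ∂ℙ := by
    apply lintegral_mono
    intro ω
    calc ENNReal.ofReal ((1 + θ) ^ (Z ω))
        ≤ ENNReal.ofReal (1 + u * (Real.exp (K₀ * (Z ω : ℝ)) - 1)) :=
          ENNReal.ofReal_le_ofReal (pow_base_bound hθ hK hK0 (Z ω))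
      _ = 1 + ENNReal.ofReal u * (ENNReal.ofReal (Real.exp (K₀ * (Z ω : ℝ))) - 1) := by
          rw [ENNReal.ofReal_add zero_le_one
              (mul_nonneg hu0 (by linarith [Real.one_le_exp (by positivity : (0:ℝ) ≤ K₀ * (Z ω : ℝ))])),
            ENNReal.ofReal_one, ENNReal.ofReal_mul hu0,
            ENNReal.ofReal_sub _ zero_le_one, ENNReal.ofReal_one]
  have step2 : ∫⁻ ω, (1 + ENNReal.ofReal u * (ENNReal.ofReal (Real.exp (K₀ * (Z ω : ℝ))) - 1)) ∂ℙ
      = 1 + ENNReal.ofReal u * (M - 1) := by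
    rw [lintegral_add_left measurable_const, lintegral_const,
      lintegral_const_mul _ (f := fun ω => ENNReal.ofReal (Real.exp (K₀ * (Z ω : ℝ))) - 1) (hfmeas.sub measurable_const),
      lintegral_sub measurable_const (by simp) (ae_of_all _ hone_le), lintegral_one]
    simp [hMdef]
  exact step1.trans step2.le

lemma factor_bound_exp {Ω : Type*} [MeasureSpace Ω] [IsProbabilityMeasure (ℙ : Measure Ω)]
    (Z : Ω → ℕ) (hZ : Measurable Z) {K₀ θ : ℝ} (hθ : 0 ≤ θ) (hK : θ ≤ K₀) (hK0 : 0 < K₀)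
    (hM : ∫⁻ ω, ENNReal.ofReal (Real.exp (K₀ * (Z ω : ℝ))) ∂ℙ ≠ ∞) :
    ∫⁻ ω, ENNReal.ofReal ((1 + θ) ^ (Z ω)) ∂ℙ
      ≤ ENNReal.ofReal (Real.exp ((θ / K₀) *
          ((∫⁻ ω, ENNReal.ofReal (Real.exp (K₀ * (Z ω : ℝ))) ∂ℙ) - 1).toReal)) := by
  set M := ∫⁻ ω, ENNReal.ofReal (Real.exp (K₀ * (Z ω : ℝ))) ∂ℙ with hMdef
  set u := θ / K₀ with hu
  set m := (M - 1).toReal with hm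
  have hu0 : 0 ≤ u := div_nonneg hθ hK0.le
  have hM1 : M - 1 = ENNReal.ofReal m := by
    rw [hm, ENNReal.ofReal_toReal (by simp [ENNReal.sub_ne_top, hM])]
  calc ∫⁻ ω, ENNReal.ofReal ((1 + θ) ^ (Z ω)) ∂ℙ
      ≤ 1 + ENNReal.ofReal u * (M - 1) := factor_bound Z hZ hθ hK hK0 hM
    _ = ENNReal.ofReal (1 + u * m) := by
        rw [hM1, ← ENNReal.ofReal_mul hu0,
          ENNReal.ofReal_add zero_le_one (mul_nonneg hu0 ENNReal.toReal_nonneg),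
          ENNReal.ofReal_one]
    _ ≤ ENNReal.ofReal (Real.exp (u * m)) :=
        ENNReal.ofReal_le_ofReal (by linarith [Real.add_one_le_exp (u * m)])

/-- If `Z_0` has a finite exponential moment `E[e^{K₀ Z_0}] < ∞`, then for all sufficiently
small `K > 0` the stationary variable `W^{(0)} = Σ_j Y_j` (with `Y_j` independent,
conditionally `Binomial(Z, (1−p)^j)` thinnings of independent copies of `Z_0`) satisfies
`E[e^{K W^{(0)}}] = Π_{n=0}^∞ E[(1 + (e^K − 1)(1−p)^n)^{Z_0}] < ∞`. -/
theorem stationary_series_exponential_moment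
    {Ω : Type*} [MeasureSpace Ω] [IsProbabilityMeasure (ℙ : Measure Ω)]
    (p : ℝ≥0) (hp0 : 0 < p) (hp1 : p < 1)
    (Z : Ω → ℕ) (hZmeas : Measurable Z)
    (K₀ : ℝ) (hK₀ : 0 < K₀)
    (hZexp : ∫⁻ ω, ENNReal.ofReal (Real.exp (K₀ * (Z ω : ℝ))) < ∞)
    (Y : ℕ → Ω → ℕ) (hYmeas : ∀ j, Measurable (Y j))
    (hYindep : iIndepFun Y ℙ)
    (hYlaw : ∀ j : ℕ, Measure.map (Y j) ℙ
      = (Measure.map Z ℙ).bind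
          (fun k => (thinPMF ((1 - (p : ℝ≥0∞)) ^ j) (pow_le_one' (by simp) j) k).toMeasure)) :
    ∃ K' : ℝ, 0 < K' ∧ ∀ K : ℝ, 0 < K → K ≤ K' →
      (∫⁻ ω, ENNReal.ofReal (Real.exp (K * ∑' j : ℕ, (Y j ω : ℝ)))
          = ∏' n : ℕ,
              ∫⁻ ω, ENNReal.ofReal ((1 + (Real.exp K - 1) * (1 - (p : ℝ)) ^ n) ^ (Z ω))) ∧
      (∫⁻ ω, ENNReal.ofReal (Real.exp (K * ∑' j : ℕ, (Y j ω : ℝ)))) < ∞ := by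
  -- basic real facts
  set qr : ℝ := 1 - (p : ℝ) with hqr_def
  have hp1' : (p : ℝ) < 1 := hp1
  have hp0' : (0:ℝ) < p := hp0
  have hqr0 : 0 ≤ qr := by rw [hqr_def]; linarith
  have hqr1 : qr < 1 := by rw [hqr_def]; linarith
  -- the ENNReal retention probability is ofReal of the real one
  have hQof : ∀ j : ℕ, (1 - (p : ℝ≥0∞)) ^ j = ENNReal.ofReal (qr ^ j) := by
    intro j
    rw [ENNReal.ofReal_pow hqr0]
    have h : ENNReal.ofReal qr = 1 - (p : ℝ≥0∞) := by
      rw [hqr_def, ENNReal.ofReal_sub _ (by positivity)]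
      simp
    rw [h]
  set M := ∫⁻ ω, ENNReal.ofReal (Real.exp (K₀ * (Z ω : ℝ))) with hM_def
  have hMne : M ≠ ∞ := hZexp.ne
  set m : ℝ := (M - 1).toReal with hm_def
  -- key identity: the MGF of each Y j
  have aeq : ∀ K : ℝ, 0 ≤ K → ∀ j : ℕ,
      ∫⁻ ω, (ENNReal.ofReal (Real.exp K)) ^ (Y j ω)
        = ∫⁻ ω, ENNReal.ofReal ((1 + (Real.exp K - 1) * qr ^ j) ^ (Z ω)) := by
    intro K hK j
    have ht1 : (1:ℝ) ≤ Real.exp K := Real.one_le_exp hK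
    rw [lintegral_pow_of_law Z hZmeas (Y j) (hYmeas j) ((1 - (p : ℝ≥0∞)) ^ j)
      (pow_le_one' (by simp) j) (hYlaw j) (ENNReal.ofReal (Real.exp K))]
    apply lintegral_congr
    intro ω
    have hbase : (1 - (p : ℝ≥0∞)) ^ j * ENNReal.ofReal (Real.exp K) + (1 - (1 - (p : ℝ≥0∞)) ^ j)
        = ENNReal.ofReal (1 + (Real.exp K - 1) * qr ^ j) := by
      rw [hQof j, ← ENNReal.ofReal_mul (by positivity)]
      have h1 : (1 : ℝ≥0∞) - ENNReal.ofReal (qr ^ j) = ENNReal.ofReal (1 - qr ^ j) := by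
        rw [ENNReal.ofReal_sub _ (by positivity), ENNReal.ofReal_one]
      rw [h1, ← ENNReal.ofReal_add (by positivity)
        (by nlinarith [pow_le_one₀ hqr0 hqr1.le (n := j)])]
      congr 1
      ring
    rw [hbase, ← ENNReal.ofReal_pow (by nlinarith [pow_nonneg hqr0 j])]
  -- each factor is at least 1
  have ha1 : ∀ K : ℝ, 0 ≤ K → ∀ n : ℕ,
      (1:ℝ≥0∞) ≤ ∫⁻ ω, ENNReal.ofReal ((1 + (Real.exp K - 1) * qr ^ n) ^ (Z ω)) := by
    intro K hK n
    have ht1 : (1:ℝ) ≤ Real.exp K := Real.one_le_exp hK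
    have : (1:ℝ≥0∞) = ∫⁻ _ : Ω, (1:ℝ≥0∞) ∂ℙ := by simp
    rw [this]
    apply lintegral_mono
    intro ω
    rw [← ENNReal.ofReal_one]
    exact ENNReal.ofReal_le_ofReal
      (one_le_pow₀ (by nlinarith [pow_nonneg hqr0 n]))
  -- exponential-type bound on each factor
  have habnd : ∀ K : ℝ, 0 < K → Real.exp K - 1 ≤ K₀ → ∀ j : ℕ,
      ∫⁻ ω, ENNReal.ofReal ((1 + (Real.exp K - 1) * qr ^ j) ^ (Z ω))
        ≤ ENNReal.ofReal (Real.exp ((Real.exp K - 1) * qr ^ j / K₀ * m)) := by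
    intro K hK hKK j
    have he1 : (1:ℝ) ≤ Real.exp K := Real.one_le_exp hK.le
    have h0 : 0 ≤ (Real.exp K - 1) * qr ^ j :=
      mul_nonneg (by linarith) (pow_nonneg hqr0 j)
    have hle : (Real.exp K - 1) * qr ^ j ≤ K₀ :=
      le_trans (mul_le_of_le_one_right (by linarith) (pow_le_one₀ hqr0 hqr1.le)) hKK
    exact factor_bound_exp Z hZmeas h0 hle hK₀ hMne
  -- linear bound on each factor
  have hlin : ∀ K : ℝ, 0 < K → Real.exp K - 1 ≤ K₀ → ∀ j : ℕ,
      ∫⁻ ω, ENNReal.ofReal ((1 + (Real.exp K - 1) * qr ^ j) ^ (Z ω))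
        ≤ 1 + ENNReal.ofReal ((Real.exp K - 1) * qr ^ j / K₀) * (M - 1) := by
    intro K hK hKK j
    have he1 : (1:ℝ) ≤ Real.exp K := Real.one_le_exp hK.le
    have h0 : 0 ≤ (Real.exp K - 1) * qr ^ j :=
      mul_nonneg (by linarith) (pow_nonneg hqr0 j)
    have hle : (Real.exp K - 1) * qr ^ j ≤ K₀ :=
      le_trans (mul_le_of_le_one_right (by linarith) (pow_le_one₀ hqr0 hqr1.le)) hKK
    exact factor_bound Z hZmeas h0 hle hK₀ hMne
  -- partial products
  have hprod : ∀ K : ℝ, 0 ≤ K → ∀ N : ℕ,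
      ∫⁻ ω, (ENNReal.ofReal (Real.exp K)) ^ (∑ j ∈ Finset.range N, Y j ω)
        = ∏ j ∈ Finset.range N,
            ∫⁻ ω, ENNReal.ofReal ((1 + (Real.exp K - 1) * qr ^ j) ^ (Z ω)) := by
    intro K hK N
    rw [lintegral_pow_sum Y hYmeas hYindep _ N]
    exact Finset.prod_congr rfl fun j _ => aeq K hK j
  -- uniform bound on partial products
  have hB : ∀ K : ℝ, 0 < K → Real.exp K - 1 ≤ K₀ → ∀ N : ℕ,
      ∏ j ∈ Finset.range N, ∫⁻ ω, ENNReal.ofReal ((1 + (Real.exp K - 1) * qr ^ j) ^ (Z ω))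
        ≤ ENNReal.ofReal (Real.exp ((Real.exp K - 1) / K₀ * m * (1 - qr)⁻¹)) := by
    intro K hK hKK N
    have he1 : (1:ℝ) ≤ Real.exp K := Real.one_le_exp hK.le
    have hm0 : 0 ≤ m := ENNReal.toReal_nonneg
    have hc0 : 0 ≤ (Real.exp K - 1) / K₀ * m := mul_nonneg (div_nonneg (by linarith) hK₀.le) hm0
    have hgs : ∑ j ∈ Finset.range N, qr ^ j ≤ (1 - qr)⁻¹ :=
      (Summable.sum_le_tsum _ (fun i _ => pow_nonneg hqr0 i)
        (summable_geometric_of_lt_one hqr0 hqr1)).trans_eq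
        (tsum_geometric_of_lt_one hqr0 hqr1)
    calc ∏ j ∈ Finset.range N, ∫⁻ ω, ENNReal.ofReal ((1 + (Real.exp K - 1) * qr ^ j) ^ (Z ω))
        ≤ ∏ j ∈ Finset.range N,
            ENNReal.ofReal (Real.exp ((Real.exp K - 1) * qr ^ j / K₀ * m)) :=
          Finset.prod_le_prod' fun j _ => habnd K hK hKK j
      _ = ENNReal.ofReal (∏ j ∈ Finset.range N,
            Real.exp ((Real.exp K - 1) * qr ^ j / K₀ * m)) :=
          (ENNReal.ofReal_prod_of_nonneg fun i _ => (Real.exp_pos _).le).symm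
      _ = ENNReal.ofReal (Real.exp
            (∑ j ∈ Finset.range N, (Real.exp K - 1) * qr ^ j / K₀ * m)) := by
          rw [Real.exp_sum]
      _ ≤ ENNReal.ofReal (Real.exp ((Real.exp K - 1) / K₀ * m * (1 - qr)⁻¹)) := by
          apply ENNReal.ofReal_le_ofReal
          apply Real.exp_le_exp.mpr
          calc ∑ j ∈ Finset.range N, (Real.exp K - 1) * qr ^ j / K₀ * m
              = ((Real.exp K - 1) / K₀ * m) * ∑ j ∈ Finset.range N, qr ^ j := by
                rw [Finset.mul_sum]
                exact Finset.sum_congr rfl fun j _ => by ring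
            _ ≤ _ := mul_le_mul_of_nonneg_left hgs hc0
  -- choice of K'
  set K' := Real.log (1 + K₀) with hK'_def
  have hK'0 : 0 < K' := Real.log_pos (by linarith)
  have hexpK' : Real.exp K' = 1 + K₀ := Real.exp_log (by linarith)
  have hKK' : Real.exp K' - 1 ≤ K₀ := by rw [hexpK']; linarith
  have hYmeasE : ∀ j, Measurable (fun ω => ((Y j ω : ℕ) : ℝ≥0∞)) :=
    fun j => (measurable_of_countable _).comp (hYmeas j)
  -- expectation bound for each Y j
  have hEY : ∀ j, ENNReal.ofReal K' * ∫⁻ ω, ((Y j ω : ℕ) : ℝ≥0∞) ∂ℙ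
      ≤ ENNReal.ofReal ((Real.exp K' - 1) * qr ^ j / K₀) * (M - 1) := by
    intro j
    have hpt : ∀ n : ℕ, 1 + ENNReal.ofReal K' * (n : ℝ≥0∞)
        ≤ (ENNReal.ofReal (Real.exp K')) ^ n := by
      intro n
      have h1 : (ENNReal.ofReal (Real.exp K')) ^ n = ENNReal.ofReal (Real.exp (K' * n)) := by
        rw [← ENNReal.ofReal_pow (Real.exp_pos _).le, ← Real.exp_nat_mul, mul_comm]
      have h2 : 1 + ENNReal.ofReal K' * (n : ℝ≥0∞) = ENNReal.ofReal (1 + K' * n) := by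
        rw [ENNReal.ofReal_add zero_le_one (by positivity), ENNReal.ofReal_one,
          ENNReal.ofReal_mul hK'0.le, ENNReal.ofReal_natCast]
      rw [h1, h2]
      exact ENNReal.ofReal_le_ofReal (by linarith [Real.add_one_le_exp (K' * n)])
    have step : 1 + ENNReal.ofReal K' * ∫⁻ ω, ((Y j ω : ℕ) : ℝ≥0∞) ∂ℙ
        ≤ 1 + ENNReal.ofReal ((Real.exp K' - 1) * qr ^ j / K₀) * (M - 1) := by
      calc 1 + ENNReal.ofReal K' * ∫⁻ ω, ((Y j ω : ℕ) : ℝ≥0∞) ∂ℙ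
          = ∫⁻ ω, (1 + ENNReal.ofReal K' * ((Y j ω : ℕ) : ℝ≥0∞)) ∂ℙ := by
            rw [lintegral_add_left measurable_const, lintegral_const,
              lintegral_const_mul _ (hYmeasE j)]
            simp
        _ ≤ ∫⁻ ω, (ENNReal.ofReal (Real.exp K')) ^ (Y j ω) ∂ℙ :=
            lintegral_mono fun ω => hpt (Y j ω)
        _ = ∫⁻ ω, ENNReal.ofReal ((1 + (Real.exp K' - 1) * qr ^ j) ^ (Z ω)) ∂ℙ :=
            aeq K' hK'0.le j
        _ ≤ _ := hlin K' hK'0 hKK' j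
    exact (ENNReal.add_le_add_iff_left ENNReal.one_ne_top).mp step
  -- the series of expectations is finite
  have hsum_int : ∑' j, ∫⁻ ω, ((Y j ω : ℕ) : ℝ≥0∞) ∂ℙ ≠ ∞ := by
    intro h
    have h1 : ENNReal.ofReal K' * ∑' j, ∫⁻ ω, ((Y j ω : ℕ) : ℝ≥0∞) ∂ℙ
        ≤ ∑' j, ENNReal.ofReal ((Real.exp K' - 1) * qr ^ j / K₀) * (M - 1) := by
      rw [← ENNReal.tsum_mul_left]
      exact ENNReal.tsum_le_tsum hEY
    have h2 : ∑' j, ENNReal.ofReal ((Real.exp K' - 1) * qr ^ j / K₀) * (M - 1) ≠ ∞ := by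
      have hterm : ∀ j : ℕ, ENNReal.ofReal ((Real.exp K' - 1) * qr ^ j / K₀) * (M - 1)
          = (ENNReal.ofReal qr) ^ j *
              (ENNReal.ofReal ((Real.exp K' - 1) / K₀) * (M - 1)) := by
        intro j
        rw [show (Real.exp K' - 1) * qr ^ j / K₀ = (qr ^ j) * ((Real.exp K' - 1) / K₀) by ring,
          ENNReal.ofReal_mul (by positivity), ENNReal.ofReal_pow hqr0, mul_assoc]
      simp_rw [hterm]
      rw [ENNReal.tsum_mul_right, ENNReal.tsum_geometric]
      apply ENNReal.mul_ne_top
      · rw [ENNReal.inv_ne_top]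
        intro h0
        rw [tsub_eq_zero_iff_le] at h0
        exact absurd h0 (not_le.mpr (ENNReal.ofReal_lt_one.mpr hqr1))
      · exact ENNReal.mul_ne_top ENNReal.ofReal_ne_top (by simp [ENNReal.sub_ne_top, hMne])
    have hKne : ENNReal.ofReal K' ≠ 0 := by
      rw [Ne, ENNReal.ofReal_eq_zero]; exact not_le.mpr hK'0
    rw [h, ENNReal.mul_top hKne] at h1
    exact h2 (top_le_iff.mp h1 ▸ rfl)
  -- a.e. summability of the series
  have hYae : ∀ᵐ ω ∂(ℙ : Measure Ω), Summable (fun j => ((Y j ω : ℕ) : ℝ)) := by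
    have hmeas : Measurable fun ω => ∑' j, ((Y j ω : ℕ) : ℝ≥0∞) :=
      Measurable.ennreal_tsum hYmeasE
    have hfin : ∫⁻ ω, ∑' j, ((Y j ω : ℕ) : ℝ≥0∞) ∂ℙ ≠ ∞ := by
      rw [lintegral_tsum fun j => (hYmeasE j).aemeasurable]
      exact hsum_int
    filter_upwards [ae_lt_top hmeas hfin] with ω hω
    have hs := ENNReal.summable_toReal hω.ne
    simpa using hs
  refine ⟨K', hK'0, fun K hK hKle => ?_⟩
  have he1 : (1:ℝ) ≤ Real.exp K := Real.one_le_exp hK.le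
  have hKK : Real.exp K - 1 ≤ K₀ := by
    have h := Real.exp_le_exp.mpr hKle
    rw [hexpK'] at h
    linarith
  -- a.e. identity between the exponential of the sum and the sup of partial products
  have haeq : ∀ᵐ ω ∂(ℙ : Measure Ω),
      ENNReal.ofReal (Real.exp (K * ∑' j : ℕ, (Y j ω : ℝ)))
        = ⨆ N, (ENNReal.ofReal (Real.exp K)) ^ (∑ j ∈ Finset.range N, Y j ω) := by
    filter_upwards [hYae] with ω hsum
    have hT1 : (1:ℝ≥0∞) ≤ ENNReal.ofReal (Real.exp K) := by
      rw [← ENNReal.ofReal_one]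
      exact ENNReal.ofReal_le_ofReal he1
    have hmono : Monotone fun N =>
        (ENNReal.ofReal (Real.exp K)) ^ (∑ j ∈ Finset.range N, Y j ω) :=
      fun N N' hNN' => pow_le_pow_right₀ hT1
        (Finset.sum_le_sum_of_subset (Finset.range_subset_range.mpr hNN'))
    have h1 : Filter.Tendsto (fun N => ∑ j ∈ Finset.range N, ((Y j ω : ℕ) : ℝ))
        Filter.atTop (nhds (∑' j, ((Y j ω : ℕ) : ℝ))) := hsum.hasSum.tendsto_sum_nat
    have hcont : Continuous fun x : ℝ => ENNReal.ofReal (Real.exp (K * x)) :=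
      ENNReal.continuous_ofReal.comp (Real.continuous_exp.comp (continuous_const.mul continuous_id))
    have h2 := (hcont.tendsto _).comp h1
    have h3 : ∀ N : ℕ, ENNReal.ofReal (Real.exp (K * ∑ j ∈ Finset.range N, ((Y j ω : ℕ) : ℝ)))
        = (ENNReal.ofReal (Real.exp K)) ^ (∑ j ∈ Finset.range N, Y j ω) := by
      intro N
      rw [← ENNReal.ofReal_pow (Real.exp_pos _).le, ← Real.exp_nat_mul, Nat.cast_sum, mul_comm]
    have h2' : Filter.Tendsto
        (fun N => (ENNReal.ofReal (Real.exp K)) ^ (∑ j ∈ Finset.range N, Y j ω))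
        Filter.atTop (nhds (ENNReal.ofReal (Real.exp (K * ∑' j : ℕ, (Y j ω : ℝ))))) := by
      have := h2
      simp only [Function.comp_def, h3] at this
      exact this
    exact tendsto_nhds_unique h2' (tendsto_atTop_iSup hmono)
  have hmeasN : ∀ N : ℕ, Measurable fun ω =>
      (ENNReal.ofReal (Real.exp K)) ^ (∑ j ∈ Finset.range N, Y j ω) := fun N =>
    (measurable_of_countable (fun n : ℕ => (ENNReal.ofReal (Real.exp K)) ^ n)).comp
      (Finset.measurable_sum (Finset.range N) (fun i _ => hYmeas i))
  have hmonoN : Monotone fun N : ℕ => fun ω =>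
      (ENNReal.ofReal (Real.exp K)) ^ (∑ j ∈ Finset.range N, Y j ω) := by
    intro N N' hNN' ω
    have hT1 : (1:ℝ≥0∞) ≤ ENNReal.ofReal (Real.exp K) := by
      rw [← ENNReal.ofReal_one]
      exact ENNReal.ofReal_le_ofReal he1
    exact pow_le_pow_right₀ hT1 (Finset.sum_le_sum_of_subset (Finset.range_subset_range.mpr hNN'))
  have lhs_eq : ∫⁻ ω, ENNReal.ofReal (Real.exp (K * ∑' j : ℕ, (Y j ω : ℝ)))
      = ∏' n : ℕ, ∫⁻ ω, ENNReal.ofReal ((1 + (Real.exp K - 1) * qr ^ n) ^ (Z ω)) := by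
    rw [lintegral_congr_ae haeq, lintegral_iSup hmeasN hmonoN,
      ennreal_tprod_eq_iSup _ (ha1 K hK.le)]
    exact iSup_congr fun N => hprod K hK.le N
  refine ⟨lhs_eq, ?_⟩
  rw [lhs_eq, ennreal_tprod_eq_iSup _ (ha1 K hK.le)]
  exact lt_of_le_of_lt (iSup_le fun N => hB K hK hKK N) ENNReal.ofReal_lt_top
end
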